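/- Let t ∈ ℂ with t^3 ≠ 1 and let g_t = t(α_0^3 + α_1^3 + α_2^3) − (t^3 + 2) α_0 α_1 α_2 ∈ ℂ[α_0, α_1, α_2]. Then the partial derivatives ∂g_t/∂α_0, ∂g_t/∂α_1, ∂g_t/∂α_2 have a common zero in ℂ^3 ∖ {0} (i.e., the plane cubic curve defined by g_t is singular) if and only if t(t^3 + 8) = 0. Equivalently, the Cayleyan curve of the Hesse cubic f_t is singular if and only if the j-invariant of the curve {f_t = 0} is zero. -/
import Mathlib


/-!
For `t³ ≠ 1`, the Cayleyan curve of the Hesse cubic, defined by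
`g_t = t(α₀³ + α₁³ + α₂³) − (t³ + 2) α₀α₁α₂`, is singular (its partial
derivatives have a common zero in `ℂ³ ∖ {0}`) if and only if `t(t³ + 8) = 0`,
i.e. if and only if the `j`-invariant of the Hesse cubic `{f_t = 0}` is zero.
-/

noncomputable section

open MvPolynomial

/-- The polynomial ring `ℂ[α₀, α₁, α₂]`. -/
abbrev PolyRing3 := MvPolynomial (Fin 3) ℂ

/-- The Cayleyan cubic `g_t = t(α₀³ + α₁³ + α₂³) − (t³ + 2) α₀α₁α₂`. -/
def cayleyanCubic (t : ℂ) : PolyRing3 :=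
  C t * (X 0 ^ 3 + X 1 ^ 3 + X 2 ^ 3) - C (t ^ 3 + 2) * (X 0 * X 1 * X 2)

lemma eval_pd0 (t : ℂ) (z : Fin 3 → ℂ) :
    eval z (pderiv 0 (cayleyanCubic t)) = 3 * t * z 0 ^ 2 - (t ^ 3 + 2) * (z 1 * z 2) := by
  simp [cayleyanCubic, pderiv_X]; ring

lemma eval_pd1 (t : ℂ) (z : Fin 3 → ℂ) :
    eval z (pderiv 1 (cayleyanCubic t)) = 3 * t * z 1 ^ 2 - (t ^ 3 + 2) * (z 0 * z 2) := by
  simp [cayleyanCubic, pderiv_X]; ring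

lemma eval_pd2 (t : ℂ) (z : Fin 3 → ℂ) :
    eval z (pderiv 2 (cayleyanCubic t)) = 3 * t * z 2 ^ 2 - (t ^ 3 + 2) * (z 0 * z 1) := by
  simp [cayleyanCubic, pderiv_X]; ring

lemma all_zero_aux (t x y w : ℂ) (ht0 : t ≠ 0)
    (e1 : 3 * t * y ^ 2 - (t ^ 3 + 2) * (x * w) = 0)
    (e2 : 3 * t * w ^ 2 - (t ^ 3 + 2) * (x * y) = 0)
    (hx : x = 0) : y = 0 ∧ w = 0 := by
  subst hx
  constructor
  · have : 3 * t * y ^ 2 = 0 := by linear_combination e1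
    rcases mul_eq_zero.1 this with h | h
    · exact absurd ((mul_eq_zero.1 h).resolve_left (by norm_num)) ht0
    · exact pow_eq_zero_iff (by norm_num) |>.1 h
  · have : 3 * t * w ^ 2 = 0 := by linear_combination e2
    rcases mul_eq_zero.1 this with h | h
    · exact absurd ((mul_eq_zero.1 h).resolve_left (by norm_num)) ht0
    · exact pow_eq_zero_iff (by norm_num) |>.1 h

theorem cayleyan_singular_iff_j_zero (t : ℂ) (ht : t ^ 3 ≠ 1) :
    (∃ z : Fin 3 → ℂ, z ≠ 0 ∧ ∀ i, eval z (pderiv i (cayleyanCubic t)) = 0) ↔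
      t * (t ^ 3 + 8) = 0 := by
  constructor
  · rintro ⟨z, hz, h⟩
    have e0 := h 0; rw [eval_pd0] at e0
    have e1 := h 1; rw [eval_pd1] at e1
    have e2 := h 2; rw [eval_pd2] at e2
    by_cases ht0 : t = 0
    · simp [ht0]
    set x := z 0; set y := z 1; set w := z 2
    have hxyw : x * y * w ≠ 0 := by
      intro h0
      apply hz
      rcases mul_eq_zero.1 h0 with h0 | hw0
      · rcases mul_eq_zero.1 h0 with hx0 | hy0
        · obtain ⟨hy0, hw0⟩ := all_zero_aux t x y w ht0 e1 e2 hx0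
          funext i; fin_cases i <;> assumption
        · obtain ⟨hx0, hw0⟩ := all_zero_aux t y x w ht0
            (by linear_combination e0) (by linear_combination e2) hy0
          funext i; fin_cases i <;> assumption
      · obtain ⟨hx0, hy0⟩ := all_zero_aux t w x y ht0
          (by linear_combination e0) (by linear_combination e1) hw0
        funext i; fin_cases i <;> assumption
    have key : (27 * t ^ 3 - (t ^ 3 + 2) ^ 3) * (x * y * w) ^ 2 = 0 := by
      linear_combination (3 * t * y ^ 2) * (3 * t * w ^ 2) * e0 +
        ((t ^ 3 + 2) * (y * w)) * (3 * t * w ^ 2) * e1 +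
        ((t ^ 3 + 2) * (y * w)) * ((t ^ 3 + 2) * (x * w)) * e2
    have h27 : 27 * t ^ 3 - (t ^ 3 + 2) ^ 3 = 0 :=
      (mul_eq_zero.1 key).resolve_right (pow_ne_zero _ hxyw)
    have hfac : (t ^ 3 - 1) ^ 2 * (t ^ 3 + 8) = 0 := by linear_combination -h27
    have h8 : t ^ 3 + 8 = 0 :=
      (mul_eq_zero.1 hfac).resolve_left (pow_ne_zero _ (sub_ne_zero.2 ht))
    rw [h8, mul_zero]
  · intro h
    rcases mul_eq_zero.1 h with ht0 | h8
    · refine ⟨![1, 0, 0], ?_, ?_⟩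
      · intro h0; have := congrFun h0 0; simp at this
      · intro i; fin_cases i
        · show eval _ (pderiv 0 (cayleyanCubic t)) = 0; rw [eval_pd0]; simp [ht0]
        · show eval _ (pderiv 1 (cayleyanCubic t)) = 0; rw [eval_pd1]; simp [ht0]
        · show eval _ (pderiv 2 (cayleyanCubic t)) = 0; rw [eval_pd2]; simp [ht0]
    · refine ⟨![1, -t / 2, 1], ?_, ?_⟩
      · intro h0; have := congrFun h0 0; simp at this
      · intro i; fin_cases i
        · show eval _ (pderiv 0 (cayleyanCubic t)) = 0
          rw [eval_pd0]
          simp only [Matrix.cons_val_zero, Matrix.cons_val_one, Matrix.head_cons, Matrix.cons_val_two, Matrix.tail_cons]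
          linear_combination (t / 2) * h8
        · show eval _ (pderiv 1 (cayleyanCubic t)) = 0
          rw [eval_pd1]
          simp only [Matrix.cons_val_zero, Matrix.cons_val_one, Matrix.head_cons, Matrix.cons_val_two, Matrix.tail_cons]
          linear_combination (-1 / 4 : ℂ) * h8
        · show eval _ (pderiv 2 (cayleyanCubic t)) = 0
          rw [eval_pd2]
          simp only [Matrix.cons_val_zero, Matrix.cons_val_one, Matrix.head_cons, Matrix.cons_val_two, Matrix.tail_cons]
          linear_combination (t / 2) * h8
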